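/- The rational unit vectors are dense in the unit sphere of EuclideanSpace ℝ (Fin 3). -/

import Mathlib

open Filter Topology

/-- Inverse stereographic projection from the north pole. -/
noncomputable def stereoInv3 (u v : ℝ) : EuclideanSpace ℝ (Fin 3) :=
  (EuclideanSpace.equiv (Fin 3) ℝ).symm
    ![2*u/(u^2+v^2+1), 2*v/(u^2+v^2+1), (u^2+v^2-1)/(u^2+v^2+1)]

lemma stereoInv3_apply0 (u v : ℝ) : stereoInv3 u v 0 = 2*u/(u^2+v^2+1) := rfl
lemma stereoInv3_apply1 (u v : ℝ) : stereoInv3 u v 1 = 2*v/(u^2+v^2+1) := rfl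
lemma stereoInv3_apply2 (u v : ℝ) : stereoInv3 u v 2 = (u^2+v^2-1)/(u^2+v^2+1) := rfl

lemma stereoInv3_denom_ne (u v : ℝ) : u^2+v^2+1 ≠ 0 := by positivity

lemma norm_stereoInv3 (u v : ℝ) : ‖stereoInv3 u v‖ = 1 := by
  have hd := stereoInv3_denom_ne u v
  rw [EuclideanSpace.norm_eq, Fin.sum_univ_three, stereoInv3_apply0, stereoInv3_apply1,
    stereoInv3_apply2]
  simp only [Real.norm_eq_abs, sq_abs]
  rw [show (1:ℝ) = Real.sqrt 1 from (Real.sqrt_one).symm]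
  congr 1
  field_simp
  ring

lemma stereoInv3_continuous : Continuous fun p : ℝ × ℝ => stereoInv3 p.1 p.2 := by
  apply (EuclideanSpace.equiv (Fin 3) ℝ).symm.continuous.comp
  apply continuous_pi
  intro i
  fin_cases i <;> simp <;>
    exact Continuous.div (by fun_prop) (by fun_prop)
      (fun p => stereoInv3_denom_ne p.1 p.2)

lemma stereoInv3_mem (q r : ℚ) :
    stereoInv3 (q : ℝ) (r : ℝ) ∈ {y : EuclideanSpace ℝ (Fin 3) |
      ‖y‖ = 1 ∧ ∀ i, ∃ q : ℚ, y i = (q : ℝ)} := by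
  refine ⟨norm_stereoInv3 _ _, ?_⟩
  have hq : ((q^2 + r^2 + 1 : ℚ) : ℝ) ≠ 0 := by push_cast; exact stereoInv3_denom_ne _ _
  have hq' : (q^2 + r^2 + 1 : ℚ) ≠ 0 := fun h => hq (by rw [h]; simp)
  intro i
  fin_cases i
  · refine ⟨2*q/(q^2+r^2+1), ?_⟩
    show stereoInv3 (q:ℝ) (r:ℝ) 0 = _
    rw [stereoInv3_apply0]; push_cast; ring
  · refine ⟨2*r/(q^2+r^2+1), ?_⟩
    show stereoInv3 (q:ℝ) (r:ℝ) 1 = _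
    rw [stereoInv3_apply1]; push_cast; ring
  · refine ⟨(q^2+r^2-1)/(q^2+r^2+1), ?_⟩
    show stereoInv3 (q:ℝ) (r:ℝ) 2 = _
    rw [stereoInv3_apply2]; push_cast; ring

/-- A rational approximating sequence for any real number. -/
lemma exists_rat_seq (a : ℝ) : ∃ q : ℕ → ℚ, Tendsto (fun n => (q n : ℝ)) atTop (𝓝 a) := by
  have : a ∈ closure (Set.range ((↑) : ℚ → ℝ)) := by
    rw [Rat.denseRange_cast.closure_range]; trivial
  obtain ⟨f, hf, hft⟩ := mem_closure_iff_seq_limit.1 this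
  choose q hq using hf
  exact ⟨q, by simpa [funext hq] using hft⟩

lemma sphere_sum (x : EuclideanSpace ℝ (Fin 3)) (hx : ‖x‖ = 1) :
    (x 0)^2 + (x 1)^2 + (x 2)^2 = 1 := by
  have := congrArg (· ^ 2) hx
  rw [EuclideanSpace.norm_eq, Fin.sum_univ_three] at this
  simp only [Real.norm_eq_abs, sq_abs] at this
  rw [Real.sq_sqrt (by positivity)] at this
  simpa using this

set_option maxHeartbeats 1000000 in
lemma aux_ne_pole (x : EuclideanSpace ℝ (Fin 3)) (hx : ‖x‖ = 1) (h2 : x 2 ≠ 1) :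
    x ∈ closure {y : EuclideanSpace ℝ (Fin 3) |
      ‖y‖ = 1 ∧ ∀ i, ∃ q : ℚ, y i = (q : ℝ)} := by
  have hsum : (x 0)^2 + (x 1)^2 + (x 2)^2 = 1 := sphere_sum x hx
  have hc : (1 : ℝ) - x 2 ≠ 0 := fun h => h2 (by linarith [sub_eq_zero.1 h])
  have hxe : stereoInv3 (x 0 / (1 - x 2)) (x 1 / (1 - x 2)) = x := by
    have hd : (x 0 / (1 - x 2))^2 + (x 1 / (1 - x 2))^2 + 1 = 2 / (1 - x 2) := by
      field_simp
      nlinarith [hsum]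
    ext i
    fin_cases i
    · show stereoInv3 (x 0 / (1 - x 2)) (x 1 / (1 - x 2)) 0 = x 0
      rw [stereoInv3_apply0, hd]
      field_simp
    · show stereoInv3 (x 0 / (1 - x 2)) (x 1 / (1 - x 2)) 1 = x 1
      rw [stereoInv3_apply1, hd]
      field_simp
    · show stereoInv3 (x 0 / (1 - x 2)) (x 1 / (1 - x 2)) 2 = x 2
      rw [stereoInv3_apply2]
      have hnum : (x 0 / (1 - x 2))^2 + (x 1 / (1 - x 2))^2 - 1 = 2/(1-x 2) - 2 := by
        rw [show (x 0 / (1 - x 2))^2 + (x 1 / (1 - x 2))^2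
            = ((x 0 / (1 - x 2))^2 + (x 1 / (1 - x 2))^2 + 1) - 1 by ring, hd]
        ring
      rw [hnum, hd]
      field_simp
      ring
  obtain ⟨q, hq⟩ := exists_rat_seq (x 0 / (1 - x 2))
  obtain ⟨r, hr⟩ := exists_rat_seq (x 1 / (1 - x 2))
  have htend : Tendsto (fun n => stereoInv3 (q n : ℝ) (r n : ℝ)) atTop (𝓝 x) := by
    have hp : Tendsto (fun n => ((q n : ℝ), (r n : ℝ))) atTop
        (𝓝 (x 0 / (1 - x 2), x 1 / (1 - x 2))) := hq.prodMk_nhds hr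
    have := (stereoInv3_continuous.tendsto (x 0 / (1 - x 2), x 1 / (1 - x 2))).comp hp
    rw [← hxe]
    exact this
  exact mem_closure_of_tendsto htend (Eventually.of_forall fun n => stereoInv3_mem (q n) (r n))

/-- The rational points of the unit sphere in `ℝ³` are dense in the unit
sphere. -/
theorem rational_points_dense_in_sphere
    (x : EuclideanSpace ℝ (Fin 3)) (hx : ‖x‖ = 1) :
    x ∈ closure {y : EuclideanSpace ℝ (Fin 3) |
      ‖y‖ = 1 ∧ ∀ i, ∃ q : ℚ, y i = (q : ℝ)} := by
  by_cases h2 : x 2 = 1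
  · have hneg : (-x) 2 ≠ 1 := by
      rw [PiLp.neg_apply, h2]; norm_num
    have hmem := aux_ne_pole (-x) (by rw [norm_neg, hx]) hneg
    have hS : (Neg.neg '' {y : EuclideanSpace ℝ (Fin 3) |
        ‖y‖ = 1 ∧ ∀ i, ∃ q : ℚ, y i = (q : ℝ)}) ⊆ {y : EuclideanSpace ℝ (Fin 3) |
        ‖y‖ = 1 ∧ ∀ i, ∃ q : ℚ, y i = (q : ℝ)} := by
      rintro _ ⟨y, ⟨hy1, hy2⟩, rfl⟩
      refine ⟨by rw [norm_neg, hy1], fun i => ?_⟩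
      obtain ⟨q, hq⟩ := hy2 i
      exact ⟨-q, by rw [PiLp.neg_apply, hq]; push_cast; ring⟩
    have hmem2 : x ∈ Neg.neg '' closure {y : EuclideanSpace ℝ (Fin 3) |
        ‖y‖ = 1 ∧ ∀ i, ∃ q : ℚ, y i = (q : ℝ)} := ⟨-x, hmem, neg_neg x⟩
    exact closure_mono hS (image_closure_subset_closure_image continuous_neg hmem2)
  · exact aux_ne_pole x hx h2
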